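/- Let L be a set of lines in a finite projective plane of order q, and suppose the maximum number of lines of L passing through a common point is exactly c. Then the number of points covered by the union of the lines in L is at most c^2 - (|L|+1)c + |L|(q+1) + 1. -/

import Mathlib

open Configuration

lemma ncard_biUnion_le_sum {α β : Type*} [Fintype β] (s : Finset α) (f : α → Set β) :
    (⋃ a ∈ s, f a).ncard ≤ ∑ a ∈ s, (f a).ncard := by
  classical
  induction s using Finset.induction_on with
  | empty => simp
  | insert a s h ih =>
    rw [Finset.set_biUnion_insert, Finset.sum_insert h]
    exact le_trans (Set.ncard_union_le _ _) (Nat.add_le_add_left ih _)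

theorem maxcover {P L : Type*} [Membership P L] [ProjectivePlane P L]
    [Fintype P] [Fintype L] {q : ℕ} (hq : ProjectivePlane.order P L = q)
    (S : Set L) (c : ℕ)
    (hc : IsGreatest {n : ℕ | ∃ p : P, ({l ∈ S | p ∈ l}).ncard = n} c) :
    ({x : P | ∃ l ∈ S, x ∈ l}.ncard : ℤ) ≤
      (c : ℤ) ^ 2 - (S.ncard + 1) * c + S.ncard * (q + 1) + 1 := by
  classical
  obtain ⟨⟨p, hp⟩, -⟩ := hc
  set T : Set L := {l ∈ S | p ∈ l} with hT
  have hTS : T ⊆ S := fun l hl => hl.1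
  -- points on a line
  have hpts : ∀ l : L, {x : P | x ∈ l}.ncard = q + 1 := by
    intro l
    have h1 := ProjectivePlane.pointCount_eq P l
    rw [hq] at h1
    rw [← h1, Configuration.pointCount, Set.ncard_eq_toFinset_card', Set.toFinset_setOf]
    rw [Nat.card_eq_fintype_card]
    simp [Fintype.card_subtype]
  have hcq : c ≤ q + 1 := by
    have h2 : {l : L | p ∈ l}.ncard = q + 1 := by
      have h1 := ProjectivePlane.lineCount_eq L p
      rw [hq] at h1
      rw [← h1, Configuration.lineCount, Set.ncard_eq_toFinset_card', Set.toFinset_setOf,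
        Nat.card_eq_fintype_card]
      simp [Fintype.card_subtype]
    rw [← hp, ← h2]
    exact Set.ncard_le_ncard (fun l hl => hl.2) (Set.toFinite _)
  have hcS : c ≤ S.ncard := hp ▸ Set.ncard_le_ncard hTS (Set.toFinite _)
  -- finsets
  set Tf : Finset L := (Set.toFinite T).toFinset with hTf
  set Uf : Finset L := (Set.toFinite (S \ T)).toFinset with hUf
  have hTfc : Tf.card = c := by
    rw [hTf, ← Set.ncard_eq_toFinset_card T (Set.toFinite T)]; exact hp
  have hUfc : Uf.card = S.ncard - c := by
    rw [hUf, ← Set.ncard_eq_toFinset_card _ (Set.toFinite (S \ T)), Set.ncard_diff hTS, hp]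
  set A : Set P := {p} ∪ ⋃ l ∈ Tf, {x : P | x ∈ l} with hA
  -- bound on A
  have hAcard : A.ncard ≤ 1 + c * q := by
    have hsub : A ⊆ {p} ∪ ⋃ l ∈ Tf, ({x : P | x ∈ l} \ {p}) := by
      rw [hA]
      intro x hx
      rcases hx with hx | hx
      · exact Or.inl hx
      · simp only [Set.mem_iUnion, exists_prop] at hx ⊢
        obtain ⟨l, hl, hxl⟩ := hx
        by_cases hxp : x = p
        · exact Or.inl (by simp [hxp])
        · exact Or.inr (Set.mem_biUnion hl ⟨hxl, hxp⟩)
    calc A.ncard ≤ ({p} ∪ ⋃ l ∈ Tf, ({x : P | x ∈ l} \ {p})).ncard :=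
          Set.ncard_le_ncard hsub (Set.toFinite _)
      _ ≤ ({p} : Set P).ncard + (⋃ l ∈ Tf, ({x : P | x ∈ l} \ {p})).ncard :=
          Set.ncard_union_le _ _
      _ ≤ 1 + ∑ l ∈ Tf, ({x : P | x ∈ l} \ {p}).ncard := by
          rw [Set.ncard_singleton]
          exact Nat.add_le_add_left (ncard_biUnion_le_sum _ _) 1
      _ ≤ 1 + ∑ l ∈ Tf, q := by
          refine Nat.add_le_add_left (Finset.sum_le_sum fun l hl => ?_) 1
          have hpl : p ∈ l := ((Set.Finite.mem_toFinset _).mp hl).2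
          have h1 : ({x : P | x ∈ l} \ {p}).ncard = {x : P | x ∈ l}.ncard - 1 :=
            Set.ncard_diff_singleton_of_mem (show p ∈ {x : P | x ∈ l} from hpl)
          rw [h1, hpts l]
          omega
      _ = 1 + c * q := by rw [Finset.sum_const, hTfc, smul_eq_mul]
  -- bound on each extra line
  have hB : ∀ l ∈ Uf, ({x : P | x ∈ l} \ A).ncard ≤ (q + 1) - c := by
    intro l hl
    obtain ⟨hlS, hlT⟩ := (Set.Finite.mem_toFinset _).mp hl
    have hpl : p ∉ l := fun hpl => hlT ⟨hlS, hpl⟩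
    -- injective map from T into pts l ∩ A
    have hex : ∀ m ∈ T, ∃ x : P, x ∈ m ∧ x ∈ l := by
      intro m hm
      have hml : m ≠ l := fun h => hpl (h ▸ hm.2)
      exact ⟨HasPoints.mkPoint hml, HasPoints.mkPoint_ax hml⟩
    have : Nonempty P := ⟨p⟩
    choose! f hf1 hf2 using hex
    have hinj : Set.InjOn f T := by
      intro m₁ hm₁ m₂ hm₂ hfe
      have := Configuration.Nondegenerate.eq_or_eq (P := P) (L := L)
        (hf1 m₁ hm₁) hm₁.2 (hfe ▸ hf1 m₂ hm₂) hm₂.2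
      rcases this with h | h
      · exact absurd (h ▸ hf2 m₁ hm₁) hpl
      · exact h
    have hmaps : Set.MapsTo f T ({x : P | x ∈ l} ∩ A) := by
      intro m hm
      refine ⟨hf2 m hm, Or.inr ?_⟩
      exact Set.mem_biUnion ((Set.Finite.mem_toFinset _).mpr hm) (hf1 m hm)
    have hcle : c ≤ ({x : P | x ∈ l} ∩ A).ncard := by
      rw [← hp]
      exact Set.ncard_le_ncard_of_injOn f hmaps hinj (Set.toFinite _)
    have hsplit : ({x : P | x ∈ l} ∩ A).ncard + ({x : P | x ∈ l} \ A).ncard = q + 1 := by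
      rw [← hpts l]
      exact Set.ncard_inter_add_ncard_diff_eq_ncard _ _ (Set.toFinite _)
    omega
  -- main bound
  have hcover : {x : P | ∃ l ∈ S, x ∈ l} ⊆ A ∪ ⋃ l ∈ Uf, ({x : P | x ∈ l} \ A) := by
    intro x ⟨l, hlS, hxl⟩
    by_cases hxA : x ∈ A
    · exact Or.inl hxA
    · refine Or.inr ?_
      by_cases hlT : l ∈ T
      · exact absurd (Or.inr (Set.mem_biUnion ((Set.Finite.mem_toFinset _).mpr hlT) hxl)) hxA
      · exact Set.mem_biUnion ((Set.Finite.mem_toFinset _).mpr ⟨hlS, hlT⟩) ⟨hxl, hxA⟩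
  have hmain : {x : P | ∃ l ∈ S, x ∈ l}.ncard ≤ 1 + c * q + (S.ncard - c) * ((q + 1) - c) := by
    calc {x : P | ∃ l ∈ S, x ∈ l}.ncard
        ≤ (A ∪ ⋃ l ∈ Uf, ({x : P | x ∈ l} \ A)).ncard :=
          Set.ncard_le_ncard hcover (Set.toFinite _)
      _ ≤ A.ncard + (⋃ l ∈ Uf, ({x : P | x ∈ l} \ A)).ncard := Set.ncard_union_le _ _
      _ ≤ (1 + c * q) + ∑ l ∈ Uf, ({x : P | x ∈ l} \ A).ncard :=
          add_le_add hAcard (ncard_biUnion_le_sum _ _)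
      _ ≤ (1 + c * q) + ∑ l ∈ Uf, ((q + 1) - c) :=
          Nat.add_le_add_left (Finset.sum_le_sum hB) _
      _ = 1 + c * q + (S.ncard - c) * ((q + 1) - c) := by
          rw [Finset.sum_const, hUfc, smul_eq_mul]
  have := hmain
  zify [hcq, hcS] at this
  nlinarith [this]
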